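/- Theorem 1 (convergence of EXP-D-RL in monotone games): let ε > 0, γ > 0, consider N players with action counts n^p, n = Σ_p n^p, strategy space Δ = Π_p Δ^{n^p} ⊂ ℝⁿ, blockwise soft-max σ : ℝⁿ → ℝⁿ, and a Lipschitz continuous payoff map U : Δ → ℝⁿ such that −U is monotone on Δ, i.e., (x − x')ᵀ(U(x) − U(x')) ≤ 0 for all x, x' ∈ Δ. Assume the set of fixed points {z ∈ ℝⁿ : z = U(σ(z))} is finite. Then for every differentiable solution z : [0, ∞) → ℝⁿ of ż(t) = γ(U(σ(z(t))) − z(t)), there exists a fixed point z̄* = U(σ(z̄*)) such that z(t) → z̄* as t → ∞, and consequently σ(z(t)) → σ(z̄*) as t → ∞. -/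

import Mathlib

open Filter

/-- The soft-max function with temperature `ε`. -/
noncomputable def softmax (ε : ℝ) {m : ℕ} (w : Fin m → ℝ) : Fin m → ℝ :=
  fun i => Real.exp (w i / ε) / ∑ j, Real.exp (w j / ε)

/-- The blockwise soft-max `σ(z) = (σ_ε(z^p))_p`. -/
noncomputable def softmaxBlk (ε : ℝ) {N : ℕ} {nAct : Fin N → ℕ}
    (z : ∀ p, Fin (nAct p) → ℝ) : ∀ p, Fin (nAct p) → ℝ :=
  fun p => softmax ε (z p)

/-- The strategy space `Δ = Π_p Δ^{n^p}`. -/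
def simplexProd (N : ℕ) (nAct : Fin N → ℕ) : Set (∀ p, Fin (nAct p) → ℝ) :=
  {x | ∀ p, (∀ i, 0 ≤ x p i) ∧ ∑ i, x p i = 1}

open Real

section Basic

lemma sumexp_pos {m : ℕ} (hm : 0 < m) (w : Fin m → ℝ) (ε : ℝ) :
    0 < ∑ j, Real.exp (w j / ε) :=
  Finset.sum_pos (fun j _ => Real.exp_pos _) (by simpa [Finset.univ_nonempty_iff, ← Fin.pos_iff_nonempty])

lemma softmax_pos {m : ℕ} (ε : ℝ) (hm : 0 < m) (w : Fin m → ℝ) (i : Fin m) :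
    0 < softmax ε w i :=
  div_pos (Real.exp_pos _) (sumexp_pos hm w ε)

lemma softmax_sum {m : ℕ} (ε : ℝ) (hm : 0 < m) (w : Fin m → ℝ) :
    ∑ i, softmax ε w i = 1 := by
  unfold softmax
  rw [← Finset.sum_div, div_self (ne_of_gt (sumexp_pos hm w ε))]

lemma softmax_le_one {m : ℕ} (ε : ℝ) (hm : 0 < m) (w : Fin m → ℝ) (i : Fin m) :
    softmax ε w i ≤ 1 := by
  have h := softmax_sum ε hm w
  have := Finset.single_le_sum (f := softmax ε w) (fun j _ => le_of_lt (softmax_pos ε hm w j))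
    (Finset.mem_univ i)
  linarith

lemma log_softmax {m : ℕ} (ε : ℝ) (hm : 0 < m) (w : Fin m → ℝ) (i : Fin m) :
    Real.log (softmax ε w i) = w i / ε - Real.log (∑ j, Real.exp (w j / ε)) := by
  unfold softmax
  rw [Real.log_div (ne_of_gt (Real.exp_pos _)) (ne_of_gt (sumexp_pos hm w ε)), Real.log_exp]

end Basic

section Ineq

/-- For `0 < y ≤ 1`, `log y ≤ y - 1 - (y-1)^2/2`. -/
lemma log_le_quad_of_le_one {y : ℝ} (h0 : 0 < y) (h1 : y ≤ 1) :
    Real.log y ≤ y - 1 - (y - 1)^2 / 2 := by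
  have key : AntitoneOn (fun y : ℝ => y - 1 - (y-1)^2/2 - Real.log y) (Set.Ioc (0:ℝ) 1) := by
    apply antitoneOn_of_deriv_nonpos (convex_Ioc 0 1)
    · apply ContinuousOn.sub
      · fun_prop
      · exact Real.continuousOn_log.mono (by intro x hx; simpa using ne_of_gt hx.1)
    · intro x hx
      rw [interior_Ioc] at hx
      apply DifferentiableAt.differentiableWithinAt
      have : x ≠ 0 := ne_of_gt hx.1
      fun_prop (disch := assumption)
    · intro x hx
      rw [interior_Ioc] at hx
      have hx0 : x ≠ 0 := ne_of_gt hx.1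
      have h1' : HasDerivAt (fun y : ℝ => y - 1) 1 x := by
        simpa using (hasDerivAt_id x).sub_const 1
      have h2 : HasDerivAt (fun y : ℝ => (y-1)^2/2) (↑2 * (x-1)^1 * 1/2) x :=
        (((hasDerivAt_id x).sub_const 1).pow 2).div_const 2
      have h3 : HasDerivAt Real.log (1/x) x := by
        simpa [one_div] using Real.hasDerivAt_log hx0
      have hd : HasDerivAt (fun y : ℝ => y - 1 - (y-1)^2/2 - Real.log y) _ x := (h1'.sub h2).sub h3
      rw [hd.deriv]
      have hxp := hx.1
      rw [sub_nonpos, le_div_iff₀ hxp]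
      nlinarith [sq_nonneg (x-1)]
  have := key (Set.mem_Ioc.2 ⟨h0, h1⟩) (Set.mem_Ioc.2 ⟨one_pos, le_refl 1⟩) h1
  norm_num at this
  linarith

end Ineq

/-- For `1 ≤ y`, `log y ≤ (y - y⁻¹)/2`. -/
lemma log_le_half_sub_inv {y : ℝ} (h1 : 1 ≤ y) :
    Real.log y ≤ (y - y⁻¹) / 2 := by
  have key : MonotoneOn (fun y : ℝ => (y - y⁻¹)/2 - Real.log y) (Set.Ici (1:ℝ)) := by
    apply monotoneOn_of_deriv_nonneg (convex_Ici 1)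
    · apply ContinuousOn.sub
      · apply ContinuousOn.div_const
        apply ContinuousOn.sub continuousOn_id
        exact continuousOn_inv₀.mono (by intro x hx; simp at hx ⊢; linarith)
      · exact Real.continuousOn_log.mono (by intro x hx; simp at hx ⊢; linarith)
    · intro x hx
      rw [interior_Ici] at hx
      simp only [Set.mem_Ioi] at hx
      have : x ≠ 0 := by intro h; rw [h] at hx; linarith
      apply DifferentiableAt.differentiableWithinAt
      fun_prop (disch := assumption)
    · intro x hx
      rw [interior_Ici] at hx
      simp only [Set.mem_Ioi] at hx
      have hx0 : (0:ℝ) < x := by linarith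
      have h2 : HasDerivAt (fun y : ℝ => (y - y⁻¹)/2) ((1 - (-(x^2)⁻¹))/2) x :=
        ((hasDerivAt_id x).sub (hasDerivAt_inv (ne_of_gt hx0))).div_const 2
      have h3 : HasDerivAt Real.log (1/x) x := by
        simpa [one_div] using Real.hasDerivAt_log (ne_of_gt hx0)
      have hd : HasDerivAt (fun y : ℝ => (y - y⁻¹)/2 - Real.log y) _ x := h2.sub h3
      rw [hd.deriv]
      have hx2 : (0:ℝ) < x^2 := by positivity
      rw [sub_nonneg, div_le_div_iff₀ hx0 (by norm_num : (0:ℝ) < 2)]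
      rw [← sub_nonneg]
      have : (1 - -(x ^ 2)⁻¹) * x - 1 * 2 = (x^2 + 1 - 2*x)/x := by
        field_simp; ring
      rw [this]
      apply div_nonneg _ (le_of_lt hx0)
      nlinarith [sq_nonneg (x-1)]
  have := key (Set.mem_Ici.2 (le_refl 1)) (Set.mem_Ici.2 h1) h1
  norm_num at this
  linarith

/-- per-coordinate quadratic KL bound: for `p, q ∈ (0,1]`,
`(q-p)^2/2 ≤ q (log q - log p) - (q - p)`. -/
lemma quad_kl_term {p q : ℝ} (hp0 : 0 < p) (hp1 : p ≤ 1) (hq0 : 0 < q) (hq1 : q ≤ 1) :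
    (q - p)^2 / 2 ≤ q * (Real.log q - Real.log p) - (q - p) := by
  have hlog : Real.log q - Real.log p = - Real.log (p / q) := by
    rw [Real.log_div (ne_of_gt hp0) (ne_of_gt hq0)]; ring
  set y := p / q with hy
  have hy0 : 0 < y := div_pos hp0 hq0
  have hqy : p = q * y := by rw [hy, mul_div_assoc', mul_div_cancel_left₀ p (ne_of_gt hq0)]
  rcases le_total p q with hle | hle
  · have hy1 : y ≤ 1 := by rw [hy]; exact div_le_one_of_le₀ hle (le_of_lt hq0)
    have hlq := log_le_quad_of_le_one hy0 hy1
    have hkey : q * ((y-1)^2/2) ≤ q * (y - 1 - Real.log y) :=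
      mul_le_mul_of_nonneg_left (by linarith) (le_of_lt hq0)
    have h2 : (q-p)^2/2 ≤ q * ((y-1)^2/2) := by
      have he : q * ((y-1)^2/2) = (p - q)^2 / (2 * q) := by
        rw [hqy]; field_simp
      rw [he, div_le_div_iff₀ (by norm_num) (by linarith)]
      nlinarith [sq_nonneg (p - q)]
    rw [hlog]
    nlinarith
  · have hy1 : 1 ≤ y := (one_le_div hq0).2 hle
    have hls := log_le_half_sub_inv hy1
    have hyinv : y⁻¹ = q / p := by rw [hy]; rw [inv_div]
    have hkey : q * ((y - 2 + y⁻¹)/2) ≤ q * (y - 1 - Real.log y) :=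
      mul_le_mul_of_nonneg_left (by linarith) (le_of_lt hq0)
    have h2 : q * ((y - 2 + y⁻¹)/2) = (q - p)^2 / (2 * p) := by
      rw [hy, hyinv]; field_simp; ring
    have h3 : (q - p)^2 / 2 ≤ (q - p)^2 / (2 * p) := by
      rw [div_le_div_iff₀ (by norm_num) (by linarith)]
      nlinarith [sq_nonneg (q - p)]
    rw [hlog]
    nlinarith

/-- Gibbs-style per-term inequality: `q (log p - log q) ≤ p - q` for `p, q > 0`. -/
lemma gibbs_term {p q : ℝ} (hp : 0 < p) (hq : 0 < q) :
    q * (Real.log p - Real.log q) ≤ p - q := by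
  have h := Real.log_le_sub_one_of_pos (div_pos hp hq)
  rw [Real.log_div (ne_of_gt hp) (ne_of_gt hq)] at h
  have h2 := mul_le_mul_of_nonneg_left h (le_of_lt hq)
  calc q * (Real.log p - Real.log q) ≤ q * (p / q - 1) := h2
    _ = p - q := by field_simp

private lemma logdiff_sq_aux {a b : ℝ} (ha0 : 0 < a) (ha1 : a ≤ 1) (hb0 : 0 < b)
    (hle : b ≤ a) : (a - b)^2 ≤ (a - b) * (Real.log a - Real.log b) := by
  have h := gibbs_term hb0 ha0  -- a(log b - log a) ≤ b - a
  set d := Real.log a - Real.log b with hd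
  have had : a - b ≤ a * d := by
    have : a * (Real.log b - Real.log a) ≤ b - a := h
    nlinarith
  have hd0 : 0 ≤ d := by nlinarith
  have hab : 0 ≤ a - b := by linarith
  nlinarith [mul_le_mul_of_nonneg_left had hab, mul_nonneg (mul_nonneg hab hd0) (sub_nonneg.2 ha1)]

/-- `(a-b)(log a - log b) ≥ (a-b)^2` for `a, b ∈ (0,1]`. -/
lemma logdiff_sq {a b : ℝ} (ha0 : 0 < a) (ha1 : a ≤ 1) (hb0 : 0 < b) (hb1 : b ≤ 1) :
    (a - b)^2 ≤ (a - b) * (Real.log a - Real.log b) := by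
  rcases le_total b a with hle | hle
  · exact logdiff_sq_aux ha0 ha1 hb0 hle
  · have := logdiff_sq_aux hb0 hb1 ha0 hle
    nlinarith

/-- Lipschitz bound for log on `[c, ∞)`: `|log a - log b| ≤ |a-b|/c`. -/
lemma log_lip {a b c : ℝ} (hc : 0 < c) (ha : c ≤ a) (hb : c ≤ b) :
    |Real.log a - Real.log b| ≤ |a - b| / c := by
  have ha0 : 0 < a := lt_of_lt_of_le hc ha
  have hb0 : 0 < b := lt_of_lt_of_le hc hb
  rcases le_total b a with hle | hle
  · have h := gibbs_term ha0 hb0  -- b(log a - log b) ≤ a - b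
    have hd0 : 0 ≤ Real.log a - Real.log b :=
      sub_nonneg.2 (Real.log_le_log hb0 hle)
    rw [abs_of_nonneg hd0, abs_of_nonneg (by linarith : (0:ℝ) ≤ a - b)]
    rw [le_div_iff₀ hc]
    nlinarith
  · have h := gibbs_term hb0 ha0
    have hd0 : Real.log a - Real.log b ≤ 0 :=
      sub_nonpos.2 (Real.log_le_log ha0 hle)
    rw [abs_of_nonpos hd0, abs_of_nonpos (by linarith : a - b ≤ 0)]
    rw [le_div_iff₀ hc]
    nlinarith



section Exist

variable {N : ℕ} {nAct : Fin N → ℕ}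

abbrev Idx (N : ℕ) (nAct : Fin N → ℕ) := (p : Fin N) × Fin (nAct p)

abbrev EV (N : ℕ) (nAct : Fin N → ℕ) := EuclideanSpace ℝ (Idx N nAct)

def toX (v : EV N nAct) : ∀ p, Fin (nAct p) → ℝ := fun p i => v ⟨p, i⟩

lemma ev_sum (f : Idx N nAct → ℝ) : ∑ q : Idx N nAct, f q = ∑ p, ∑ i, f ⟨p,i⟩ := by
  rw [← Finset.sum_sigma]; rfl

lemma ev_inner (v w : EV N nAct) : (inner ℝ v w : ℝ) = ∑ q : Idx N nAct, v q * w q := by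
  simp [PiLp.inner_apply, RCLike.inner_apply, mul_comm]

lemma ev_normsq (v : EV N nAct) : ‖v‖^2 = ∑ q : Idx N nAct, (v q)^2 := by
  rw [EuclideanSpace.norm_eq, Real.sq_sqrt]
  · simp [Real.norm_eq_abs, sq_abs]
  · positivity

lemma ev_coord_le_norm (v : EV N nAct) (q : Idx N nAct) : |v q| ≤ ‖v‖ := by
  have h1 : (v q)^2 ≤ ‖v‖^2 := by
    rw [ev_normsq]
    exact Finset.single_le_sum (f := fun q => (v q)^2) (fun r _ => sq_nonneg _) (Finset.mem_univ q)
  calc |v q| = Real.sqrt ((v q)^2) := (Real.sqrt_sq_eq_abs _).symm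
    _ ≤ Real.sqrt (‖v‖^2) := Real.sqrt_le_sqrt h1
    _ = ‖v‖ := by rw [Real.sqrt_sq (norm_nonneg v)]

/-- The truncated simplex. -/
def Cset (δ : ℝ) (N : ℕ) (nAct : Fin N → ℕ) : Set (EV N nAct) :=
  {v | (∀ q : Idx N nAct, δ ≤ v q) ∧ ∀ p, ∑ i, v ⟨p, i⟩ = 1}

lemma Cset_convex (δ : ℝ) : Convex ℝ (Cset δ N nAct) := by
  intro x hx y hy a b ha hb hab
  constructor
  · intro q
    have h1 := hx.1 q
    have h2 := hy.1 q
    have : (a • x + b • y) q = a * x q + b * y q := by simp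
    rw [this]
    have hd : a*δ + b*δ = δ := by rw [← add_mul, hab, one_mul]
    linarith [mul_le_mul_of_nonneg_left h1 ha, mul_le_mul_of_nonneg_left h2 hb]
  · intro p
    have : ∀ k : Fin (nAct p), (a • x + b • y) (⟨p, k⟩ : Idx N nAct)
        = a * x ⟨p,k⟩ + b * y ⟨p,k⟩ := by intro k; simp
    simp only [this, Finset.sum_add_distrib, ← Finset.mul_sum, hx.2 p, hy.2 p]
    linarith

lemma Cset_closed (δ : ℝ) : IsClosed (Cset δ N nAct) := by
  have h1 : IsClosed (⋂ q : Idx N nAct, {v : EV N nAct | δ ≤ v q}) := by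
    apply isClosed_iInter
    intro q
    exact isClosed_le continuous_const ((continuous_apply q).comp (PiLp.continuous_ofLp 2 _))
  have h2 : IsClosed (⋂ p : Fin N, {v : EV N nAct | ∑ i, v ⟨p,i⟩ = 1}) := by
    apply isClosed_iInter
    intro p
    apply isClosed_eq _ continuous_const
    exact continuous_finset_sum _ (fun i _ =>
      (continuous_apply (⟨p,i⟩ : Idx N nAct)).comp (PiLp.continuous_ofLp 2 _))
  have : Cset δ N nAct = (⋂ q : Idx N nAct, {v : EV N nAct | δ ≤ v q}) ∩
      (⋂ p : Fin N, {v : EV N nAct | ∑ i, v ⟨p,i⟩ = 1}) := by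
    ext v; simp [Cset, Set.mem_iInter]
  rw [this]
  exact h1.inter h2

lemma Cset_mem_simplex {δ : ℝ} (hδ : 0 ≤ δ) {v : EV N nAct} (hv : v ∈ Cset δ N nAct) :
    toX v ∈ simplexProd N nAct := by
  intro p
  exact ⟨fun i => le_trans hδ (hv.1 ⟨p,i⟩), hv.2 p⟩

lemma Cset_coord_le_one {δ : ℝ} (hδ : 0 ≤ δ) {v : EV N nAct} (hv : v ∈ Cset δ N nAct)
    (q : Idx N nAct) : v q ≤ 1 := by
  have hs := hv.2 q.1
  have : v q ≤ ∑ i, v ⟨q.1, i⟩ := by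
    have := Finset.single_le_sum (f := fun i => v (⟨q.1, i⟩ : Idx N nAct))
      (fun i _ => le_trans hδ (hv.1 ⟨q.1,i⟩)) (Finset.mem_univ q.2)
    simpa using this
  linarith

end Exist

section Proj

variable {H : Type*} [NormedAddCommGroup H] [InnerProductSpace ℝ H] [CompleteSpace H]

/-- Projection onto a nonempty closed convex set: existence with variational characterization. -/
lemma proj_exists {K : Set H} (hne : K.Nonempty) (hcl : IsClosed K) (hco : Convex ℝ K)
    (u : H) : ∃ v ∈ K, ∀ w ∈ K, (inner ℝ (u - v) (w - v) : ℝ) ≤ 0 := by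
  obtain ⟨v, hvK, hv⟩ := exists_norm_eq_iInf_of_complete_convex hne (hcl.isComplete) hco u
  exact ⟨v, hvK, (norm_eq_iInf_iff_real_inner_le_zero hco hvK).1 hv⟩

/-- Firm nonexpansiveness from the characterization. -/
lemma proj_firm {K : Set H} {u1 u2 v1 v2 : H} (hv1 : v1 ∈ K) (hv2 : v2 ∈ K)
    (h1 : ∀ w ∈ K, (inner ℝ (u1 - v1) (w - v1) : ℝ) ≤ 0)
    (h2 : ∀ w ∈ K, (inner ℝ (u2 - v2) (w - v2) : ℝ) ≤ 0) :
    ‖v1 - v2‖ ≤ ‖u1 - u2‖ := by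
  have ha := h1 v2 hv2
  have hb := h2 v1 hv1
  have key : ‖v1 - v2‖^2 ≤ (inner ℝ (u1 - u2) (v1 - v2) : ℝ) := by
    have e1 : (inner ℝ (u1 - u2) (v1 - v2) : ℝ) - ‖v1 - v2‖^2
        = (inner ℝ (u1 - v1) (v1 - v2) : ℝ) - (inner ℝ (u2 - v2) (v1 - v2) : ℝ) := by
      rw [← real_inner_self_eq_norm_sq]
      rw [← inner_sub_left, ← inner_sub_left]
      congr 1
      abel
    have e2 : (inner ℝ (u1 - v1) (v1 - v2) : ℝ) = - (inner ℝ (u1 - v1) (v2 - v1) : ℝ) := by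
      rw [← inner_neg_right]; congr 1; abel
    have e3 : (inner ℝ (u2 - v2) (v1 - v2) : ℝ) ≤ 0 := hb
    nlinarith [ha]
  have h := le_trans key (real_inner_le_norm (u1 - u2) (v1 - v2))
  rcases eq_or_lt_of_le (norm_nonneg (v1 - v2)) with hz | hz
  · rw [← hz]; exact norm_nonneg _
  · nlinarith
end Proj

lemma simplex_coord_nonneg {N : ℕ} {nAct : Fin N → ℕ} {x : ∀ p, Fin (nAct p) → ℝ}
    (hx : x ∈ simplexProd N nAct) (p : Fin N) (i : Fin (nAct p)) : 0 ≤ x p i := (hx p).1 i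

lemma simplex_coord_le_one {N : ℕ} {nAct : Fin N → ℕ} {x : ∀ p, Fin (nAct p) → ℝ}
    (hx : x ∈ simplexProd N nAct) (p : Fin N) (i : Fin (nAct p)) : x p i ≤ 1 := by
  have h := (hx p).2
  have := Finset.single_le_sum (f := fun j => x p j) (fun j _ => (hx p).1 j) (Finset.mem_univ i)
  linarith

section ExistMain

variable (ε : ℝ) {N : ℕ} {nAct : Fin N → ℕ}
  (U : (∀ p, Fin (nAct p) → ℝ) → ∀ p, Fin (nAct p) → ℝ) (L : NNReal)

set_option maxHeartbeats 1600000 in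
theorem exists_fixed_point (hε : 0 < ε) (hn : ∀ p, 0 < nAct p)
    (hU_lip : LipschitzOnWith L U (simplexProd N nAct))
    (hU_mono : ∀ x ∈ simplexProd N nAct, ∀ x' ∈ simplexProd N nAct,
      ∑ p, ∑ i, (x p i - x' p i) * (U x p i - U x' p i) ≤ 0) :
    ∃ zs, U (softmaxBlk ε zs) = zs := by
  classical
  -- upper bound on block sizes
  set nbR : ℝ := (∑ p, nAct p : ℕ) + 1 with hnbR
  have hnb1 : (1:ℝ) ≤ nbR := by
    have : (0:ℝ) ≤ ((∑ p, nAct p : ℕ) : ℝ) := Nat.cast_nonneg _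
    rw [hnbR]; linarith
  have hnp_le : ∀ p, (nAct p : ℝ) ≤ nbR := by
    intro p
    have h := Finset.single_le_sum (f := fun p => nAct p) (fun q _ => Nat.zero_le _)
      (Finset.mem_univ p)
    have : ((nAct p : ℕ) : ℝ) ≤ ((∑ q, nAct q : ℕ) : ℝ) := by exact_mod_cast h
    rw [hnbR]; linarith
  have hnp_pos : ∀ p, (0:ℝ) < (nAct p : ℝ) := fun p => by exact_mod_cast hn p
  -- uniform point
  set vunif : EV N nAct := WithLp.toLp 2 (fun q => 1 / (nAct q.1 : ℝ) : Idx N nAct → ℝ) with hvunif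
  set x0 := toX vunif with hx0
  have hx0mem : x0 ∈ simplexProd N nAct := by
    intro p
    constructor
    · intro i
      simp only [hx0, toX, hvunif, PiLp.toLp_apply]
      have := hnp_pos p
      positivity
    · rw [hx0]
      simp only [toX, hvunif, PiLp.toLp_apply]
      rw [Finset.sum_const, Finset.card_univ, Fintype.card_fin]
      rw [nsmul_eq_mul]
      rw [mul_one_div, div_self (ne_of_gt (hnp_pos p))]
  -- bound on U over the simplex
  set M : ℝ := ‖U x0‖ + L with hM
  have hM0 : 0 ≤ M := by positivity
  have hUbdd : ∀ x ∈ simplexProd N nAct, ∀ p i, |U x p i| ≤ M := by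
    intro x hx p i
    have h1 : |U x0 p i| ≤ ‖U x0‖ := by
      have a1 := norm_le_pi_norm (U x0) p
      have a2 := norm_le_pi_norm (U x0 p) i
      rw [Real.norm_eq_abs] at a2
      linarith
    have hdist : dist x x0 ≤ 1 := by
      rw [dist_pi_le_iff zero_le_one]
      intro p'
      rw [dist_pi_le_iff zero_le_one]
      intro i'
      rw [Real.dist_eq, abs_le]
      have b1 := simplex_coord_nonneg hx p' i'
      have b2 := simplex_coord_le_one hx p' i'
      have b3 := simplex_coord_nonneg hx0mem p' i'
      have b4 := simplex_coord_le_one hx0mem p' i'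
      constructor <;> linarith
    have h2 : dist (U x) (U x0) ≤ L * 1 := by
      have := hU_lip.dist_le_mul x hx x0 hx0mem
      have hL : (L:ℝ) * dist x x0 ≤ L * 1 := by
        apply mul_le_mul_of_nonneg_left hdist L.2
      linarith
    have h3 : |U x p i - U x0 p i| ≤ dist (U x) (U x0) := by
      have a1 := dist_le_pi_dist (U x) (U x0) p
      have a2 := dist_le_pi_dist (U x p) (U x0 p) i
      rw [Real.dist_eq] at a2
      linarith
    have := abs_add_le (U x p i - U x0 p i) (U x0 p i)
    simp only [sub_add_cancel] at this
    rw [hM]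
    linarith
  -- choice of δ
  set δ : ℝ := Real.exp (-(Real.log (2*nbR) + (2*M+ε)/ε)) with hδ
  have hδ0 : 0 < δ := Real.exp_pos _
  have hlogδ : Real.log δ = -(Real.log (2*nbR) + (2*M+ε)/ε) := by rw [hδ, Real.log_exp]
  have hδle : δ ≤ 1/(2*nbR) := by
    rw [hδ, neg_add, Real.exp_add]
    have e1 : Real.exp (-Real.log (2*nbR)) = 1/(2*nbR) := by
      rw [Real.exp_neg, Real.exp_log (by linarith)]
      rw [one_div]
    rw [e1]
    have e2 : Real.exp (-((2*M+ε)/ε)) ≤ 1 := by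
      rw [Real.exp_le_one_iff]
      have : 0 < (2*M+ε)/ε := by positivity
      linarith
    have : 0 < 1/(2*nbR) := by positivity
    nlinarith
  have hδ_lt_inv : ∀ p, δ < 1/(nAct p : ℝ) := by
    intro p
    have h1 : 1/(2*nbR) < 1/(nAct p : ℝ) := by
      apply one_div_lt_one_div_of_lt (hnp_pos p)
      have := hnp_le p
      linarith
    linarith
  have hδ1 : δ ≤ 1 := by
    have : 1/(2*nbR) ≤ 1 := by
      rw [div_le_one (by linarith)]
      linarith
    linarith
  -- truncated simplex basics
  have hCne : (Cset δ N nAct).Nonempty := by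
    refine ⟨vunif, ?_, ?_⟩
    · intro q
      have := hδ_lt_inv q.1
      rw [hvunif]
      simp only [one_div, PiLp.toLp_apply]
      rw [← one_div]
      linarith
    · intro p
      rw [hvunif]
      simp only [PiLp.toLp_apply]
      rw [Finset.sum_const, Finset.card_univ, Fintype.card_fin, nsmul_eq_mul,
        mul_one_div, div_self (ne_of_gt (hnp_pos p))]
  have hCcl : IsClosed (Cset δ N nAct) := Cset_closed δ
  have hCco : Convex ℝ (Cset δ N nAct) := Cset_convex δ
  -- the operator
  set Fop : EV N nAct → EV N nAct :=
    fun v => WithLp.toLp 2 (fun q => ε * Real.log (v q) - U (toX v) q.1 q.2 : Idx N nAct → ℝ) with hFop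
  have hFopq : ∀ (v : EV N nAct) q, Fop v q = ε * Real.log (v q) - U (toX v) q.1 q.2 :=
    fun v q => rfl
  -- coordinatewise Lipschitz bound for U between points of the truncated simplex
  have hUco : ∀ v ∈ Cset δ N nAct, ∀ w ∈ Cset δ N nAct, ∀ q : Idx N nAct,
      |U (toX v) q.1 q.2 - U (toX w) q.1 q.2| ≤ L * ‖v - w‖ := by
    intro v hv w hw q
    have h3 : |U (toX v) q.1 q.2 - U (toX w) q.1 q.2| ≤ dist (U (toX v)) (U (toX w)) := by
      have a1 := dist_le_pi_dist (U (toX v)) (U (toX w)) q.1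
      have a2 := dist_le_pi_dist (U (toX v) q.1) (U (toX w) q.1) q.2
      rw [Real.dist_eq] at a2; linarith
    have h4 := hU_lip.dist_le_mul _ (Cset_mem_simplex (le_of_lt hδ0) hv)
      _ (Cset_mem_simplex (le_of_lt hδ0) hw)
    have h5 : dist (toX v) (toX w) ≤ ‖v - w‖ := by
      rw [dist_pi_le_iff (norm_nonneg _)]
      intro p
      rw [dist_pi_le_iff (norm_nonneg _)]
      intro i
      rw [Real.dist_eq]
      have := ev_coord_le_norm (v - w) ⟨p,i⟩
      simpa [toX] using this
    have := mul_le_mul_of_nonneg_left h5 L.2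
    exact le_trans h3 (le_trans h4 this)
  -- strong monotonicity of Fop on the truncated simplex
  have hmono : ∀ v ∈ Cset δ N nAct, ∀ w ∈ Cset δ N nAct,
      ε * ‖v - w‖^2 ≤ (inner ℝ (Fop v - Fop w) (v - w) : ℝ) := by
    intro v hv w hw
    have hsub : ∀ q : Idx N nAct, (v - w) q = v q - w q := fun q => by simp
    rw [ev_inner, ev_normsq]
    simp only [hsub]
    have hco : ∀ q : Idx N nAct, (Fop v - Fop w) q * (v q - w q)
        = ε * ((v q - w q) * (Real.log (v q) - Real.log (w q)))
          - (v q - w q) * (U (toX v) q.1 q.2 - U (toX w) q.1 q.2) := by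
      intro q
      have e1 : (Fop v - Fop w) q = Fop v q - Fop w q := by simp
      rw [e1, hFopq, hFopq]
      ring
    rw [Finset.sum_congr rfl (fun q _ => hco q), Finset.sum_sub_distrib]
    have h2 : ∑ q : Idx N nAct, (v q - w q) * (U (toX v) q.1 q.2 - U (toX w) q.1 q.2) ≤ 0 := by
      have hm := hU_mono (toX v) (Cset_mem_simplex (le_of_lt hδ0) hv)
        (toX w) (Cset_mem_simplex (le_of_lt hδ0) hw)
      rw [ev_sum (fun q => (v q - w q) * (U (toX v) q.1 q.2 - U (toX w) q.1 q.2))]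
      exact hm
    have h1 : ∑ q : Idx N nAct, ε * (v q - w q)^2
        ≤ ∑ q : Idx N nAct, ε * ((v q - w q) * (Real.log (v q) - Real.log (w q))) := by
      apply Finset.sum_le_sum
      intro q _
      apply mul_le_mul_of_nonneg_left _ (le_of_lt hε)
      exact logdiff_sq (lt_of_lt_of_le hδ0 (hv.1 q)) (Cset_coord_le_one (le_of_lt hδ0) hv q)
        (lt_of_lt_of_le hδ0 (hw.1 q)) (Cset_coord_le_one (le_of_lt hδ0) hw q)
    rw [Finset.mul_sum]
    linarith
  -- Lipschitz bound (squared) for Fop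
  set Λ2 : ℝ := 2*(ε/δ)^2 + 2*(Fintype.card (Idx N nAct))*L^2 with hΛ2
  have hcard0 : (0:ℝ) ≤ (Fintype.card (Idx N nAct) : ℝ) := Nat.cast_nonneg _
  have hεδ : ε ≤ ε/δ := by
    rw [le_div_iff₀ hδ0]
    nlinarith
  have hΛ2pos : 0 < Λ2 := by
    have : 0 < (ε/δ)^2 := by positivity
    rw [hΛ2]
    nlinarith [sq_nonneg (L:ℝ), hcard0, mul_nonneg hcard0 (sq_nonneg (L:ℝ))]
  have hΛ2ge : ε^2 ≤ Λ2 := by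
    have h := mul_self_le_mul_self (le_of_lt hε) hεδ
    rw [hΛ2]
    rw [← pow_two, ← pow_two] at h
    nlinarith [mul_nonneg hcard0 (sq_nonneg (L:ℝ))]
  have hlip2 : ∀ v ∈ Cset δ N nAct, ∀ w ∈ Cset δ N nAct,
      ‖Fop v - Fop w‖^2 ≤ Λ2 * ‖v - w‖^2 := by
    intro v hv w hw
    rw [ev_normsq, ev_normsq]
    have hterm : ∀ q : Idx N nAct, ((Fop v - Fop w) q)^2
        ≤ 2*(ε/δ)^2*(v q - w q)^2 + 2*(L:ℝ)^2*‖v - w‖^2 := by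
      intro q
      have e1 : (Fop v - Fop w) q = ε * (Real.log (v q) - Real.log (w q))
          - (U (toX v) q.1 q.2 - U (toX w) q.1 q.2) := by
        have e : (Fop v - Fop w) q = Fop v q - Fop w q := by simp
        rw [e, hFopq, hFopq]; ring
      have hl : |Real.log (v q) - Real.log (w q)| ≤ |v q - w q|/δ :=
        log_lip hδ0 (hv.1 q) (hw.1 q)
      have hu := hUco v hv w hw q
      have hl2 : (Real.log (v q) - Real.log (w q))^2 ≤ (v q - w q)^2/δ^2 := by
        have h := pow_le_pow_left₀ (abs_nonneg _) hl 2
        rw [sq_abs, div_pow, sq_abs] at h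
        exact h
      have hu2 : (U (toX v) q.1 q.2 - U (toX w) q.1 q.2)^2 ≤ (L:ℝ)^2*‖v - w‖^2 := by
        have h := pow_le_pow_left₀ (abs_nonneg _) hu 2
        rw [sq_abs, mul_pow] at h
        exact h
      rw [e1]
      have hsq : (ε * (Real.log (v q) - Real.log (w q))
          - (U (toX v) q.1 q.2 - U (toX w) q.1 q.2))^2
          ≤ 2*(ε * (Real.log (v q) - Real.log (w q)))^2
            + 2*(U (toX v) q.1 q.2 - U (toX w) q.1 q.2)^2 := by
        nlinarith [sq_nonneg (ε * (Real.log (v q) - Real.log (w q))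
          + (U (toX v) q.1 q.2 - U (toX w) q.1 q.2))]
      have hε2 : (ε * (Real.log (v q) - Real.log (w q)))^2 ≤ (ε/δ)^2*(v q - w q)^2 := by
        have := mul_le_mul_of_nonneg_left hl2 (sq_nonneg ε)
        calc (ε * (Real.log (v q) - Real.log (w q)))^2
            = ε^2 * (Real.log (v q) - Real.log (w q))^2 := by ring
          _ ≤ ε^2 * ((v q - w q)^2/δ^2) := this
          _ = (ε/δ)^2*(v q - w q)^2 := by rw [div_pow]; ring
      linarith
    calc ∑ q : Idx N nAct, ((Fop v - Fop w) q)^2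
        ≤ ∑ q : Idx N nAct, (2*(ε/δ)^2*(v q - w q)^2 + 2*(L:ℝ)^2*‖v - w‖^2) :=
          Finset.sum_le_sum (fun q _ => hterm q)
      _ = 2*(ε/δ)^2 * (∑ q : Idx N nAct, (v q - w q)^2)
          + (Fintype.card (Idx N nAct)) * (2*(L:ℝ)^2*‖v - w‖^2) := by
          rw [Finset.sum_add_distrib, ← Finset.mul_sum, Finset.sum_const, Finset.card_univ,
            nsmul_eq_mul]
      _ ≤ Λ2 * ∑ q : Idx N nAct, (v q - w q)^2 := by
          have he : ‖v - w‖^2 = ∑ q : Idx N nAct, (v q - w q)^2 := by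
            rw [ev_normsq]
            apply Finset.sum_congr rfl
            intro q _
            have : (v - w) q = v q - w q := by simp
            rw [this]
          rw [he, hΛ2]
          apply le_of_eq
          ring
  -- step size and contraction factor
  set η : ℝ := ε/Λ2 with hη
  have hη0 : 0 < η := div_pos hε hΛ2pos
  set k2 : ℝ := 1 - ε^2/Λ2 with hk2def
  have hk2nn : 0 ≤ k2 := by
    rw [hk2def, sub_nonneg, div_le_one hΛ2pos]
    exact hΛ2ge
  have hk2lt : k2 < 1 := by
    rw [hk2def]
    have : 0 < ε^2/Λ2 := by positivity
    linarith
  -- the metric projection onto the truncated simplex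
  have hproj := fun u => proj_exists (H := EV N nAct) hCne hCcl hCco u
  set P : EV N nAct → EV N nAct := fun u => (hproj u).choose with hP
  have hPmem : ∀ u, P u ∈ Cset δ N nAct := fun u => (hproj u).choose_spec.1
  have hPchar : ∀ u, ∀ w ∈ Cset δ N nAct, (inner ℝ (u - P u) (w - P u) : ℝ) ≤ 0 :=
    fun u => (hproj u).choose_spec.2
  -- the iteration map
  set T : Cset δ N nAct → Cset δ N nAct :=
    fun x => ⟨P (↑x - η • Fop ↑x), hPmem _⟩ with hT
  set k : ℝ := Real.sqrt k2 with hkdef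
  have hcontr : ∀ x y : Cset δ N nAct, dist (T x) (T y) ≤ k * dist x y := by
    intro x y
    rw [Subtype.dist_eq, Subtype.dist_eq, dist_eq_norm, dist_eq_norm]
    have hTx : (↑(T x) : EV N nAct) = P (↑x - η • Fop ↑x) := rfl
    have hTy : (↑(T y) : EV N nAct) = P (↑y - η • Fop ↑y) := rfl
    rw [hTx, hTy]
    have step1 : ‖P (↑x - η • Fop ↑x) - P (↑y - η • Fop ↑y)‖
        ≤ ‖(↑x - η • Fop ↑x) - (↑y - η • Fop ↑y)‖ :=
      proj_firm (hPmem _) (hPmem _) (hPchar _) (hPchar _)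
    have step2 : ‖(↑x - η • Fop ↑x) - (↑y - η • Fop ↑y)‖^2 ≤ k2 * ‖(↑x : EV N nAct) - ↑y‖^2 := by
      have e1 : (↑x - η • Fop ↑x) - (↑y - η • Fop ↑y)
          = ((↑x : EV N nAct) - ↑y) - η • (Fop ↑x - Fop ↑y) := by
        rw [smul_sub]; abel
      rw [e1, norm_sub_sq_real]
      rw [real_inner_smul_right, norm_smul]
      have hm := hmono ↑x x.2 ↑y y.2
      have hl := hlip2 ↑x x.2 ↑y y.2
      have hcomm : (inner ℝ ((↑x : EV N nAct) - ↑y) (Fop ↑x - Fop ↑y) : ℝ)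
          = (inner ℝ (Fop ↑x - Fop ↑y) ((↑x : EV N nAct) - ↑y) : ℝ) := real_inner_comm _ _
      rw [hcomm]
      have habs : ‖η‖ = η := by rw [Real.norm_eq_abs, abs_of_pos hη0]
      rw [habs, mul_pow]
      have hb1 : -(2*η) * (inner ℝ (Fop ↑x - Fop ↑y) ((↑x : EV N nAct) - ↑y) : ℝ)
          ≤ -(2*η) * (ε * ‖(↑x : EV N nAct) - ↑y‖^2) := by
        apply mul_le_mul_of_nonpos_left hm (by linarith)
      have hb2 : η^2 * ‖Fop ↑x - Fop ↑y‖^2 ≤ η^2 * (Λ2 * ‖(↑x : EV N nAct) - ↑y‖^2) :=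
        mul_le_mul_of_nonneg_left hl (sq_nonneg η)
      have hfin : ‖(↑x : EV N nAct) - ↑y‖^2 - 2*η*(ε * ‖(↑x : EV N nAct) - ↑y‖^2)
          + η^2 * (Λ2 * ‖(↑x : EV N nAct) - ↑y‖^2) = k2 * ‖(↑x : EV N nAct) - ↑y‖^2 := by
        rw [hk2def, hη]
        field_simp
        ring
      linarith
    have step3 : ‖(↑x - η • Fop ↑x) - (↑y - η • Fop ↑y)‖ ≤ k * ‖(↑x : EV N nAct) - ↑y‖ := by
      have h := Real.sqrt_le_sqrt step2
      rw [Real.sqrt_sq (norm_nonneg _)] at h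
      rw [Real.sqrt_mul hk2nn, Real.sqrt_sq (norm_nonneg _)] at h
      exact h
    exact le_trans step1 step3
  have hk0 : 0 ≤ k := Real.sqrt_nonneg _
  have hklt : k < 1 := by
    rw [hkdef]
    calc Real.sqrt k2 < Real.sqrt 1 := Real.sqrt_lt_sqrt hk2nn hk2lt
      _ = 1 := Real.sqrt_one
  haveI : Nonempty (Cset δ N nAct) := hCne.to_subtype
  haveI : CompleteSpace (Cset δ N nAct) := hCcl.completeSpace_coe
  have hcontracting : ContractingWith (Real.toNNReal k) T := by
    constructor
    · rw [Real.toNNReal_lt_one]; exact hklt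
    · apply LipschitzWith.of_dist_le_mul
      intro x y
      rw [Real.coe_toNNReal k hk0]
      exact hcontr x y
  obtain ⟨xhat, hfix, -, -⟩ := hcontracting.exists_fixedPoint
    (Classical.arbitrary (Cset δ N nAct)) (edist_ne_top _ _)
  set vh : EV N nAct := ↑xhat with hvh
  have hvhC : vh ∈ Cset δ N nAct := xhat.2
  have hfixv : P (vh - η • Fop vh) = vh := congrArg Subtype.val hfix
  -- variational inequality
  have hVI : ∀ w ∈ Cset δ N nAct, 0 ≤ (inner ℝ (Fop vh) (w - vh) : ℝ) := by
    intro w hw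
    have h := hPchar (vh - η • Fop vh) w hw
    rw [hfixv] at h
    have e : (vh - η • Fop vh) - vh = -(η • Fop vh) := by abel
    rw [e, inner_neg_left, real_inner_smul_left] at h
    nlinarith
  -- moving mass between two actions of one player
  have vi_step : ∀ (p : Fin N) (i j : Fin (nAct p)), δ < vh ⟨p,j⟩ →
      Fop vh ⟨p,j⟩ ≤ Fop vh ⟨p,i⟩ := by
    intro p i j hj
    by_cases hij : i = j
    · rw [hij]
    set s : ℝ := vh ⟨p,j⟩ - δ with hs
    have hs0 : 0 < s := by rw [hs]; linarith
    set w : EV N nAct := vh + EuclideanSpace.single (⟨p,i⟩ : Idx N nAct) s - EuclideanSpace.single (⟨p,j⟩ : Idx N nAct) s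
      with hw
    have hwq : ∀ q : Idx N nAct, w q
        = vh q + (if q = ⟨p,i⟩ then s else 0) - (if q = ⟨p,j⟩ then s else 0) := by
      intro q
      rw [hw]
      simp [EuclideanSpace.single_apply]
    have hne : (⟨p,i⟩ : Idx N nAct) ≠ ⟨p,j⟩ := by
      intro h
      apply hij
      simpa [Sigma.mk.inj_iff] using h
    have hwC : w ∈ Cset δ N nAct := by
      constructor
      · intro q
        rw [hwq q]
        by_cases h1 : q = ⟨p,i⟩
        · subst h1
          simp only [if_pos rfl, if_neg hne, eq_self_iff_true, if_true]
          have := hvhC.1 (⟨p,i⟩ : Idx N nAct)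
          linarith
        · by_cases h2 : q = ⟨p,j⟩
          · subst h2
            simp only [if_neg h1, if_pos rfl, eq_self_iff_true, if_true]
            rw [hs]
            have := hvhC.1 (⟨p,j⟩ : Idx N nAct)
            linarith
          · simp only [if_neg h1, if_neg h2]
            have := hvhC.1 q
            linarith
      · intro p'
        have e : ∀ k : Fin (nAct p'), w ⟨p',k⟩
            = vh ⟨p',k⟩ + (if (⟨p',k⟩ : Idx N nAct) = ⟨p,i⟩ then s else 0)
              - (if (⟨p',k⟩ : Idx N nAct) = ⟨p,j⟩ then s else 0) := fun k => hwq ⟨p',k⟩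
        simp only [e]
        rw [Finset.sum_sub_distrib, Finset.sum_add_distrib]
        by_cases hp : p' = p
        · subst hp
          have e1 : (∑ k : Fin (nAct p'), if (⟨p',k⟩ : Idx N nAct) = ⟨p',i⟩ then s else 0) = s := by
            have : ∀ k : Fin (nAct p'), (if (⟨p',k⟩ : Idx N nAct) = ⟨p',i⟩ then s else 0)
                = (if k = i then s else 0) := by
              intro k
              congr 1
              simp [Sigma.mk.inj_iff]
            simp only [this]
            rw [Finset.sum_ite_eq' Finset.univ i (fun _ => s)]
            simp
          have e2 : (∑ k : Fin (nAct p'), if (⟨p',k⟩ : Idx N nAct) = ⟨p',j⟩ then s else 0) = s := by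
            have : ∀ k : Fin (nAct p'), (if (⟨p',k⟩ : Idx N nAct) = ⟨p',j⟩ then s else 0)
                = (if k = j then s else 0) := by
              intro k
              congr 1
              simp [Sigma.mk.inj_iff]
            simp only [this]
            rw [Finset.sum_ite_eq' Finset.univ j (fun _ => s)]
            simp
          rw [e1, e2, hvhC.2 p']
          ring
        · have e1 : (∑ k : Fin (nAct p'), if (⟨p',k⟩ : Idx N nAct) = ⟨p,i⟩ then s else 0) = 0 := by
            apply Finset.sum_eq_zero
            intro k _
            rw [if_neg]
            intro h
            exact hp (congrArg Sigma.fst h)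
          have e2 : (∑ k : Fin (nAct p'), if (⟨p',k⟩ : Idx N nAct) = ⟨p,j⟩ then s else 0) = 0 := by
            apply Finset.sum_eq_zero
            intro k _
            rw [if_neg]
            intro h
            exact hp (congrArg Sigma.fst h)
          rw [e1, e2, hvhC.2 p']
          ring
    have h := hVI w hwC
    have e : w - vh = EuclideanSpace.single (⟨p,i⟩ : Idx N nAct) s
        - EuclideanSpace.single (⟨p,j⟩ : Idx N nAct) s := by
      rw [hw]; abel
    rw [e, inner_sub_right, EuclideanSpace.inner_single_right, EuclideanSpace.inner_single_right]
      at h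
    simp only [starRingEnd_apply, star_trivial] at h
    nlinarith
  -- interiority: all coordinates exceed δ
  have hinterior : ∀ q : Idx N nAct, δ < vh q := by
    rintro ⟨p, i⟩
    rcases lt_or_eq_of_le (hvhC.1 ⟨p,i⟩) with h | h
    · exact h
    exfalso
    -- some coordinate of block p is at least 1/nAct p
    haveI : Nonempty (Fin (nAct p)) := ⟨⟨0, hn p⟩⟩
    have hex : ∃ j : Fin (nAct p), 1/(nAct p : ℝ) ≤ vh ⟨p,j⟩ := by
      by_contra hcon
      push_neg at hcon
      have hlt : ∑ k : Fin (nAct p), vh ⟨p,k⟩ < ∑ _k : Fin (nAct p), 1/(nAct p : ℝ) :=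
        Finset.sum_lt_sum_of_nonempty Finset.univ_nonempty (fun k _ => hcon k)
      rw [hvhC.2 p, Finset.sum_const, Finset.card_univ, Fintype.card_fin, nsmul_eq_mul,
        mul_one_div, div_self (ne_of_gt (hnp_pos p))] at hlt
      exact lt_irrefl 1 hlt
    obtain ⟨j, hjge⟩ := hex
    have hjδ : δ < vh ⟨p,j⟩ := lt_of_lt_of_le (hδ_lt_inv p) hjge
    have hstep := vi_step p i j hjδ
    rw [hFopq, hFopq] at hstep
    have hUi := hUbdd (toX vh) (Cset_mem_simplex (le_of_lt hδ0) hvhC) p i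
    have hUj := hUbdd (toX vh) (Cset_mem_simplex (le_of_lt hδ0) hvhC) p j
    have hUi' : |U (toX vh) (⟨p,i⟩ : Idx N nAct).1 (⟨p,i⟩ : Idx N nAct).2| ≤ M := hUi
    have hUj' : |U (toX vh) (⟨p,j⟩ : Idx N nAct).1 (⟨p,j⟩ : Idx N nAct).2| ≤ M := hUj
    have hlogj : Real.log (1/(nAct p : ℝ)) ≤ Real.log (vh ⟨p,j⟩) :=
      Real.log_le_log (by have := hnp_pos p; positivity) hjge
    have hlogi : Real.log (vh ⟨p,i⟩) = Real.log δ := by rw [← h]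
    rw [hlogi, hlogδ] at hstep
    have hmul1 : ε * Real.log (1/(nAct p : ℝ)) ≤ ε * Real.log (vh ⟨p,j⟩) :=
      mul_le_mul_of_nonneg_left hlogj (le_of_lt hε)
    have hloginv : Real.log (1/(nAct p : ℝ)) = -Real.log (nAct p : ℝ) := by
      rw [one_div, Real.log_inv]
    have hexp : ε * (-(Real.log (2*nbR) + (2*M+ε)/ε))
        = -ε * Real.log (2*nbR) - (2*M+ε) := by
      field_simp
      ring
    rw [hexp] at hstep
    have hmono_log : Real.log (nAct p : ℝ) ≤ Real.log (2*nbR) := by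
      apply Real.log_le_log (hnp_pos p)
      have := hnp_le p
      linarith
    rw [hloginv] at hmul1
    have habsi : -M ≤ U (toX vh) (⟨p,i⟩ : Idx N nAct).1 (⟨p,i⟩ : Idx N nAct).2 ∧
        U (toX vh) (⟨p,i⟩ : Idx N nAct).1 (⟨p,i⟩ : Idx N nAct).2 ≤ M := abs_le.1 hUi'
    have habsj := abs_le.1 hUj'
    have hmono_log' : ε * Real.log (nAct p : ℝ) ≤ ε * Real.log (2*nbR) :=
      mul_le_mul_of_nonneg_left hmono_log (le_of_lt hε)
    linarith [habsi.1, habsi.2, habsj.1, habsj.2]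
  -- blockwise constancy of Fop vh
  have hconst : ∀ (p : Fin N) (i j : Fin (nAct p)), Fop vh ⟨p,i⟩ = Fop vh ⟨p,j⟩ :=
    fun p i j => le_antisymm (vi_step p j i (hinterior ⟨p,i⟩))
      (vi_step p i j (hinterior ⟨p,j⟩))
  -- extract the softmax fixed point
  set xs := toX vh with hxs
  have hxsΔ : xs ∈ simplexProd N nAct := Cset_mem_simplex (le_of_lt hδ0) hvhC
  refine ⟨U xs, ?_⟩
  have hsm : softmaxBlk ε (U xs) = xs := by
    funext p i
    haveI : Nonempty (Fin (nAct p)) := ⟨⟨0, hn p⟩⟩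
    set c : ℝ := Fop vh ⟨p, ⟨0, hn p⟩⟩ with hc
    have hkey : ∀ k : Fin (nAct p), Real.exp (U xs p k / ε) = vh ⟨p,k⟩ * Real.exp (-c/ε) := by
      intro k
      have h1 : Fop vh ⟨p,k⟩ = c := hconst p k ⟨0, hn p⟩
      rw [hFopq] at h1
      have hUk : U (toX vh) p k = ε * Real.log (vh ⟨p,k⟩) - c := by linarith [h1.ge, h1.le]
      have : U xs p k / ε = Real.log (vh ⟨p,k⟩) + (-c/ε) := by
        rw [hxs, hUk]
        field_simp
        ring
      rw [this, Real.exp_add, Real.exp_log (lt_trans hδ0 (hinterior ⟨p,k⟩))]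
    have hsum : ∑ k, Real.exp (U xs p k / ε) = Real.exp (-c/ε) := by
      simp only [hkey]
      rw [← Finset.sum_mul, hvhC.2 p, one_mul]
    show softmax ε (U xs p) i = xs p i
    unfold softmax
    rw [hsum, hkey i]
    rw [mul_div_assoc, div_self (ne_of_gt (Real.exp_pos _)), mul_one]
    rfl
  rw [hsm]




end ExistMain
section Helpers

open Filter Real

lemma antitoneOn_Ici_of_hasDerivAt {f g : ℝ → ℝ} {T : ℝ}
    (hf : ∀ t ∈ Set.Ici T, HasDerivAt f (g t) t) (hg : ∀ t ∈ Set.Ici T, g t ≤ 0) :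
    AntitoneOn f (Set.Ici T) := by
  apply antitoneOn_of_deriv_nonpos (convex_Ici T)
  · intro t ht
    exact (hf t ht).continuousAt.continuousWithinAt
  · intro t ht
    rw [interior_Ici] at ht
    exact ((hf t (Set.Ioi_subset_Ici_self ht)).differentiableAt).differentiableWithinAt
  · intro t ht
    rw [interior_Ici] at ht
    rw [(hf t (Set.Ioi_subset_Ici_self ht)).deriv]
    exact hg t (Set.Ioi_subset_Ici_self ht)

lemma monotoneOn_Ici_of_hasDerivAt {f g : ℝ → ℝ} {T : ℝ}
    (hf : ∀ t ∈ Set.Ici T, HasDerivAt f (g t) t) (hg : ∀ t ∈ Set.Ici T, 0 ≤ g t) :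
    MonotoneOn f (Set.Ici T) := by
  apply monotoneOn_of_deriv_nonneg (convex_Ici T)
  · intro t ht
    exact (hf t ht).continuousAt.continuousWithinAt
  · intro t ht
    rw [interior_Ici] at ht
    exact ((hf t (Set.Ioi_subset_Ici_self ht)).differentiableAt).differentiableWithinAt
  · intro t ht
    rw [interior_Ici] at ht
    rw [(hf t (Set.Ioi_subset_Ici_self ht)).deriv]
    exact hg t (Set.Ioi_subset_Ici_self ht)

/-- blockwise Gibbs inequality -/
lemma kl_nonneg_block {m : ℕ} {q p : Fin m → ℝ} (hq : ∀ i, 0 < q i) (hp : ∀ i, 0 < p i)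
    (hsq : ∑ i, q i = 1) (hsp : ∑ i, p i = 1) :
    0 ≤ ∑ i, q i * (Real.log (q i) - Real.log (p i)) := by
  have h1 : ∑ i, q i * (Real.log (p i) - Real.log (q i)) ≤ ∑ i, (p i - q i) :=
    Finset.sum_le_sum (fun i _ => gibbs_term (hp i) (hq i))
  have h2 : ∑ i, (p i - q i) = (0:ℝ) := by
    rw [Finset.sum_sub_distrib, hsq, hsp]; ring
  have h3 : ∑ i, q i * (Real.log (q i) - Real.log (p i))
      = -∑ i, q i * (Real.log (p i) - Real.log (q i)) := by
    rw [← Finset.sum_neg_distrib]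
    apply Finset.sum_congr rfl
    intro i _
    ring
  rw [h3]
  linarith

/-- blockwise quadratic lower bound on KL -/
lemma kl_quad_block {m : ℕ} {q p : Fin m → ℝ} (hq : ∀ i, 0 < q i) (hq1 : ∀ i, q i ≤ 1)
    (hp : ∀ i, 0 < p i) (hp1 : ∀ i, p i ≤ 1)
    (hsq : ∑ i, q i = 1) (hsp : ∑ i, p i = 1) :
    (∑ i, (q i - p i)^2) / 2 ≤ ∑ i, q i * (Real.log (q i) - Real.log (p i)) := by
  have h1 : ∑ i, (q i - p i)^2/2 ≤ ∑ i, (q i * (Real.log (q i) - Real.log (p i)) - (q i - p i)) :=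
    Finset.sum_le_sum (fun i _ => quad_kl_term (hp i) (hp1 i) (hq i) (hq1 i))
  have h2 : ∑ i, (q i - p i) = (0:ℝ) := by
    rw [Finset.sum_sub_distrib, hsq, hsp]; ring
  rw [Finset.sum_sub_distrib] at h1
  rw [Finset.sum_div]
  linarith

lemma softmaxBlk_mem {N : ℕ} {nAct : Fin N → ℕ} (ε : ℝ) (hn : ∀ p, 0 < nAct p)
    (w : ∀ p, Fin (nAct p) → ℝ) : softmaxBlk ε w ∈ simplexProd N nAct :=
  fun p => ⟨fun i => le_of_lt (softmax_pos ε (hn p) (w p) i), softmax_sum ε (hn p) (w p)⟩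

/-- log-sum-exp identity: the Lyapunov block equals a cross entropy. -/
lemma lse_identity {m : ℕ} {ε : ℝ} (hε : 0 < ε) (hm : 0 < m) (q : Fin m → ℝ)
    (hq : ∑ i, q i = 1) (w : Fin m → ℝ) :
    ε * Real.log (∑ i, Real.exp (w i / ε)) - ∑ i, q i * w i
    = -(ε * ∑ i, q i * Real.log (softmax ε w i)) := by
  have h : ∀ i : Fin m, q i * Real.log (softmax ε w i)
      = q i * (w i / ε) - q i * Real.log (∑ j, Real.exp (w j / ε)) := by
    intro i
    rw [log_softmax ε hm w i]
    ring
  simp only [h]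
  rw [Finset.sum_sub_distrib, ← Finset.sum_mul, hq, one_mul, mul_sub, Finset.mul_sum]
  have h2 : ∀ i : Fin m, ε * (q i * (w i / ε)) = q i * w i := by
    intro i
    field_simp
  rw [Finset.sum_congr rfl (fun i _ => h2 i)]
  ring

/-- identity relating score differences to log-softmax differences. -/
lemma w_identity {m : ℕ} {ε : ℝ} (hε : 0 < ε) (hm : 0 < m) (a b : Fin m → ℝ) :
    ∑ i, (softmax ε a i - softmax ε b i) * (a i - b i)
    = ε * ∑ i, (softmax ε a i - softmax ε b i)
        * (Real.log (softmax ε a i) - Real.log (softmax ε b i)) := by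
  have h : ∀ i : Fin m, (softmax ε a i - softmax ε b i)
        * (Real.log (softmax ε a i) - Real.log (softmax ε b i))
      = (softmax ε a i - softmax ε b i) * ((a i - b i)/ε)
        - (softmax ε a i - softmax ε b i)
          * (Real.log (∑ j, Real.exp (a j / ε)) - Real.log (∑ j, Real.exp (b j / ε))) := by
    intro i
    rw [log_softmax ε hm a i, log_softmax ε hm b i]
    ring
  simp only [h]
  rw [Finset.sum_sub_distrib, mul_sub]
  have h0 : ∑ i, (softmax ε a i - softmax ε b i) = (0:ℝ) := by
    rw [Finset.sum_sub_distrib, softmax_sum ε hm a, softmax_sum ε hm b]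
    ring
  have h3 : ∀ i : Fin m, ε * ((softmax ε a i - softmax ε b i) * ((a i - b i)/ε))
      = (softmax ε a i - softmax ε b i) * (a i - b i) := by
    intro i
    field_simp
  rw [Finset.mul_sum, Finset.sum_congr rfl (fun i _ => h3 i)]
  rw [← Finset.sum_mul, h0]
  ring

/-- scalar linear ODE with convergent input converges. -/
lemma ode_limit {γ : ℝ} (hγ : 0 < γ) {y u : ℝ → ℝ} {l : ℝ}
    (hy : ∀ t ∈ Set.Ici (0:ℝ), HasDerivAt y (γ * (u t - y t)) t)
    (hu : Tendsto u atTop (nhds l)) : Tendsto y atTop (nhds l) := by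
  rw [Metric.tendsto_atTop]
  intro ep hep
  have hδ : 0 < ep/3 := by linarith
  set δ := ep/3 with hδdef
  obtain ⟨T0, hT0⟩ := Metric.tendsto_atTop.1 hu δ hδ
  set T := max T0 0 with hT
  have hTnn : (0:ℝ) ≤ T := le_max_right _ _
  have hub : ∀ t ∈ Set.Ici T, |u t - l| ≤ δ := by
    intro t ht
    have := hT0 t (le_trans (le_max_left _ _) ht)
    rw [Real.dist_eq] at this
    linarith
  set A : ℝ → ℝ := fun t => Real.exp (γ*t) * (y t - l) with hA
  have hexpd : ∀ t : ℝ, HasDerivAt (fun s : ℝ => Real.exp (γ*s)) (Real.exp (γ*t) * γ) t := by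
    intro t
    have := ((hasDerivAt_id t).const_mul γ).exp
    simpa using this
  have hAd : ∀ t ∈ Set.Ici T, HasDerivAt A (γ * Real.exp (γ*t) * (u t - l)) t := by
    intro t ht
    have h1 : HasDerivAt (fun s : ℝ => Real.exp (γ*s)) (Real.exp (γ*t) * γ) t := hexpd t
    have h2 : HasDerivAt (fun s => y s - l) (γ * (u t - y t)) t :=
      (hy t (le_trans hTnn ht)).sub_const l
    have := h1.mul h2
    exact this.congr_deriv (by ring)
  have hφ : AntitoneOn (fun t => A t - δ * Real.exp (γ*t)) (Set.Ici T) := by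
    apply antitoneOn_Ici_of_hasDerivAt
      (g := fun t => γ * Real.exp (γ*t) * (u t - l) - δ * (Real.exp (γ*t) * γ))
    · intro t ht
      exact (hAd t ht).sub ((hexpd t).const_mul δ)
    · intro t ht
      have h1 := hub t ht
      have h2 : u t - l ≤ δ := le_trans (le_abs_self _) h1
      have h3 : (0:ℝ) < Real.exp (γ*t) := Real.exp_pos _
      nlinarith [mul_le_mul_of_nonneg_left h2 (le_of_lt (mul_pos hγ h3))]
  have hψ : MonotoneOn (fun t => A t + δ * Real.exp (γ*t)) (Set.Ici T) := by
    apply monotoneOn_Ici_of_hasDerivAt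
      (g := fun t => γ * Real.exp (γ*t) * (u t - l) + δ * (Real.exp (γ*t) * γ))
    · intro t ht
      exact (hAd t ht).add ((hexpd t).const_mul δ)
    · intro t ht
      have h1 := hub t ht
      have h2 : -δ ≤ u t - l := by
        have := neg_abs_le (u t - l)
        linarith
      have h3 : (0:ℝ) < Real.exp (γ*t) := Real.exp_pos _
      nlinarith [mul_le_mul_of_nonneg_left h2 (le_of_lt (mul_pos hγ h3))]
  have hbound : ∀ t ∈ Set.Ici T, |y t - l| ≤ |A T| * Real.exp (-(γ*t)) + δ := by
    intro t ht
    have hTT : T ∈ Set.Ici T := Set.mem_Ici.2 le_rfl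
    have h1 := hφ hTT ht ht
    have h2 := hψ hTT ht ht
    simp only at h1 h2
    have hexppos : (0:ℝ) < Real.exp (γ*t) := Real.exp_pos _
    have hexpTpos : (0:ℝ) < Real.exp (γ*T) := Real.exp_pos _
    have hup : A t ≤ A T + δ * Real.exp (γ*t) := by nlinarith
    have hdn : A T - δ * Real.exp (γ*t) ≤ A t := by nlinarith
    have hyl : y t - l = A t * Real.exp (-(γ*t)) := by
      rw [hA]
      simp only
      rw [mul_comm (Real.exp (γ*t)), mul_assoc, ← Real.exp_add]
      simp
    have hexpn : (0:ℝ) < Real.exp (-(γ*t)) := Real.exp_pos _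
    have hee : Real.exp (γ*t) * Real.exp (-(γ*t)) = 1 := by
      rw [← Real.exp_add]; simp
    rw [abs_le]
    constructor
    · rw [hyl]
      have := mul_le_mul_of_nonneg_right hdn (le_of_lt hexpn)
      have hAT : -|A T| ≤ A T := neg_abs_le _
      have h5 : -|A T| * Real.exp (-(γ*t)) ≤ A T * Real.exp (-(γ*t)) :=
        mul_le_mul_of_nonneg_right hAT (le_of_lt hexpn)
      nlinarith
    · rw [hyl]
      have := mul_le_mul_of_nonneg_right hup (le_of_lt hexpn)
      have hAT : A T ≤ |A T| := le_abs_self _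
      have h5 : A T * Real.exp (-(γ*t)) ≤ |A T| * Real.exp (-(γ*t)) :=
        mul_le_mul_of_nonneg_right hAT (le_of_lt hexpn)
      nlinarith
  -- the exponential term eventually dies
  have htail : Tendsto (fun t => |A T| * Real.exp (-(γ*t))) atTop (nhds 0) := by
    have h1 : Tendsto (fun t : ℝ => γ*t) atTop atTop :=
      Tendsto.const_mul_atTop hγ tendsto_id
    have h2 : Tendsto (fun t : ℝ => -(γ*t)) atTop atBot := tendsto_neg_atBot_iff.2 h1
    have h3 : Tendsto (fun t : ℝ => Real.exp (-(γ*t))) atTop (nhds 0) :=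
      Real.tendsto_exp_atBot.comp h2
    have := h3.const_mul |A T|
    simpa using this
  have hev : ∀ᶠ t in atTop, |A T| * Real.exp (-(γ*t)) < δ :=
    htail.eventually_lt_const hδ
  obtain ⟨N1, hN1⟩ := eventually_atTop.1 hev
  refine ⟨max N1 T, fun t ht => ?_⟩
  have ht1 : N1 ≤ t := le_trans (le_max_left _ _) ht
  have ht2 : t ∈ Set.Ici T := le_trans (le_max_right _ _) ht
  have := hbound t ht2
  have := hN1 t ht1
  rw [Real.dist_eq]
  have : |y t - l| < 2*δ := by linarith [hbound t ht2, hN1 t ht1]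
  rw [hδdef] at this
  linarith

end Helpers

open Filter

/-- per-block difference of Lyapunov terms is a KL divergence. -/
lemma vblock_diff {m : ℕ} {ε : ℝ} (hε : 0 < ε) (hm : 0 < m) (zs w : Fin m → ℝ) :
    (ε * Real.log (∑ i, Real.exp (w i / ε)) - ∑ i, softmax ε zs i * w i)
    - (ε * Real.log (∑ i, Real.exp (zs i / ε)) - ∑ i, softmax ε zs i * zs i)
    = ε * ∑ i, softmax ε zs i * (Real.log (softmax ε zs i) - Real.log (softmax ε w i)) := by
  rw [lse_identity hε hm _ (softmax_sum ε hm zs) w, lse_identity hε hm _ (softmax_sum ε hm zs) zs]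
  rw [Finset.mul_sum, Finset.mul_sum, Finset.mul_sum, neg_sub_neg, ← Finset.sum_sub_distrib]
  apply Finset.sum_congr rfl
  intro i _
  ring


set_option maxHeartbeats 1600000 in
/-- Theorem 1 (convergence of EXP-D-RL in monotone games): if `−U` is monotone on
`Δ`, `U` is Lipschitz on `Δ`, and the fixed points of `z ↦ U(σ(z))` are finitely
many, then every solution of `ż = γ(U(σ(z)) − z)` on `[0, ∞)` converges to some
fixed point `z̄* = U(σ(z̄*))`, and `σ(z(t)) → σ(z̄*)` (a Nash distribution). -/
theorem expdrl_convergence_monotone (ε γ : ℝ) (hε : 0 < ε) (hγ : 0 < γ)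
    (N : ℕ) (nAct : Fin N → ℕ) (hn : ∀ p, 0 < nAct p)
    (U : (∀ p, Fin (nAct p) → ℝ) → ∀ p, Fin (nAct p) → ℝ)
    (L : NNReal) (hU_lip : LipschitzOnWith L U (simplexProd N nAct))
    (hU_mono : ∀ x ∈ simplexProd N nAct, ∀ x' ∈ simplexProd N nAct,
      ∑ p, ∑ i, (x p i - x' p i) * (U x p i - U x' p i) ≤ 0)
    (hfin : {w : ∀ p, Fin (nAct p) → ℝ | U (softmaxBlk ε w) = w}.Finite)
    (z : ℝ → ∀ p, Fin (nAct p) → ℝ)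
    (hz : ∀ t, 0 ≤ t → ∀ p, ∀ i,
      HasDerivAt (fun s => z s p i) (γ * (U (softmaxBlk ε (z t)) p i - z t p i)) t) :
    ∃ zs, U (softmaxBlk ε zs) = zs ∧
      Tendsto z atTop (nhds zs) ∧
      Tendsto (fun t => softmaxBlk ε (z t)) atTop (nhds (softmaxBlk ε zs)) := by
  classical
  obtain ⟨zs, hzs⟩ := exists_fixed_point ε U L hε hn hU_lip hU_mono
  refine ⟨zs, hzs, ?_⟩
  set xs := softmaxBlk ε zs with hxs
  have hxsΔ : xs ∈ simplexProd N nAct := softmaxBlk_mem ε hn zs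
  have hUxs : U xs = zs := hzs
  have hxs_pos : ∀ p i, 0 < xs p i := fun p i => softmax_pos ε (hn p) (zs p) i
  have hxs_le1 : ∀ p i, xs p i ≤ 1 := fun p i => softmax_le_one ε (hn p) (zs p) i
  have hxs_sum : ∀ p, ∑ i, xs p i = 1 := fun p => softmax_sum ε (hn p) (zs p)
  set x : ℝ → (∀ p, Fin (nAct p) → ℝ) := fun t => softmaxBlk ε (z t) with hxdef
  have hx_pos : ∀ t p i, 0 < x t p i := fun t p i => softmax_pos ε (hn p) (z t p) i
  have hx_le1 : ∀ t p i, x t p i ≤ 1 := fun t p i => softmax_le_one ε (hn p) (z t p) i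
  have hx_sum : ∀ t p, ∑ i, x t p i = 1 := fun t p => softmax_sum ε (hn p) (z t p)
  have hxΔ : ∀ t, x t ∈ simplexProd N nAct := fun t => softmaxBlk_mem ε hn (z t)
  -- the Lyapunov function
  set V : (∀ p, Fin (nAct p) → ℝ) → ℝ :=
    fun w => ∑ p, (ε * Real.log (∑ i, Real.exp (w p i / ε)) - ∑ i, xs p i * w p i) with hV
  have hVid : ∀ w : (∀ p, Fin (nAct p) → ℝ), V w - V zs
      = ε * ∑ p, ∑ i, xs p i * (Real.log (xs p i) - Real.log (softmax ε (w p) i)) := by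
    intro w
    rw [hV]
    simp only
    rw [← Finset.sum_sub_distrib, Finset.mul_sum]
    apply Finset.sum_congr rfl
    intro p _
    exact vblock_diff hε (hn p) (zs p) (w p)
  have hVnonneg : ∀ w : (∀ p, Fin (nAct p) → ℝ), 0 ≤ V w - V zs := by
    intro w
    rw [hVid w]
    apply mul_nonneg (le_of_lt hε)
    apply Finset.sum_nonneg
    intro p _
    exact kl_nonneg_block (fun i => hxs_pos p i) (fun i => softmax_pos ε (hn p) (w p) i)
      (hxs_sum p) (softmax_sum ε (hn p) (w p))
  -- derivative of the Lyapunov function along the trajectory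
  set D : ℝ → ℝ :=
    fun t => ∑ p, ∑ i, (x t p i - xs p i) * (γ * (U (x t) p i - z t p i)) with hD
  set W : ℝ → ℝ := fun t => V (z t) - V zs with hWdef
  have hVd : ∀ t ∈ Set.Ici (0:ℝ), HasDerivAt W (D t) t := by
    intro t ht
    have hmain : HasDerivAt (fun s => V (z s)) (D t) t := by
      have hblocks : ∀ p ∈ Finset.univ, HasDerivAt
          (fun s => ε * Real.log (∑ i, Real.exp (z s p i / ε)) - ∑ i, xs p i * z s p i)
          (∑ i, (x t p i - xs p i) * (γ * (U (x t) p i - z t p i))) t := by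
        intro p _
        have hz' : ∀ i, HasDerivAt (fun s => z s p i)
            (γ * (U (x t) p i - z t p i)) t := fun i => hz t ht p i
        have hexp : ∀ i, HasDerivAt (fun s => Real.exp (z s p i / ε))
            (Real.exp (z t p i / ε) * (γ * (U (x t) p i - z t p i) / ε)) t :=
          fun i => ((hz' i).div_const ε).exp
        have hS : 0 < ∑ i, Real.exp (z t p i / ε) := sumexp_pos (hn p) (z t p) ε
        have hsum : HasDerivAt (fun s => ∑ i, Real.exp (z s p i / ε))
            (∑ i, Real.exp (z t p i / ε) * (γ * (U (x t) p i - z t p i) / ε)) t :=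
          HasDerivAt.fun_sum (fun i _ => hexp i)
        have hlog := hsum.log (ne_of_gt hS)
        have hlse := hlog.const_mul ε
        have hlin : HasDerivAt (fun s => ∑ i, xs p i * z s p i)
            (∑ i, xs p i * (γ * (U (x t) p i - z t p i))) t :=
          HasDerivAt.fun_sum (fun i _ => (hz' i).const_mul (xs p i))
        have hblock : HasDerivAt
            (fun s => ε * Real.log (∑ i, Real.exp (z s p i / ε)) - ∑ i, xs p i * z s p i) _ t :=
          hlse.sub hlin
        convert hblock using 1
        have e1 : ε * ((∑ i, Real.exp (z t p i / ε) * (γ * (U (x t) p i - z t p i) / ε))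
              / (∑ i, Real.exp (z t p i / ε)))
            = ∑ i, (Real.exp (z t p i / ε) / (∑ j, Real.exp (z t p j / ε)))
              * (γ * (U (x t) p i - z t p i)) := by
          rw [Finset.sum_div, Finset.mul_sum]
          apply Finset.sum_congr rfl
          intro i _
          field_simp
        rw [e1, ← Finset.sum_sub_distrib]
        apply Finset.sum_congr rfl
        intro i _
        have ex : x t p i = Real.exp (z t p i / ε) / (∑ j, Real.exp (z t p j / ε)) := rfl
        rw [ex]
        ring
      exact HasDerivAt.fun_sum hblocks
    exact hmain.sub_const (V zs)
  -- derivative bound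
  have hDle : ∀ t ∈ Set.Ici (0:ℝ), D t ≤ -γ * W t := by
    intro t _
    have hsplit : D t = γ * (∑ p, ∑ i, (x t p i - xs p i) * (U (x t) p i - U xs p i))
        - γ * (∑ p, ∑ i, (x t p i - xs p i) * (z t p i - zs p i)) := by
      rw [hD]
      simp only
      rw [Finset.mul_sum, Finset.mul_sum, ← Finset.sum_sub_distrib]
      apply Finset.sum_congr rfl
      intro p _
      rw [Finset.mul_sum, Finset.mul_sum, ← Finset.sum_sub_distrib]
      apply Finset.sum_congr rfl
      intro i _
      rw [hUxs]
      ring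
    have hm1 : ∑ p, ∑ i, (x t p i - xs p i) * (U (x t) p i - U xs p i) ≤ 0 :=
      hU_mono (x t) (hxΔ t) xs hxsΔ
    have hm2 : W t ≤ ∑ p, ∑ i, (x t p i - xs p i) * (z t p i - zs p i) := by
      have hpb : ∀ p ∈ Finset.univ, ε * ∑ i, xs p i * (Real.log (xs p i) - Real.log (x t p i))
          ≤ ∑ i, (x t p i - xs p i) * (z t p i - zs p i) := by
        intro p _
        have hb : ∑ i, (x t p i - xs p i) * (z t p i - zs p i)
            = ε * ∑ i, (x t p i - xs p i) * (Real.log (x t p i) - Real.log (xs p i)) :=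
          w_identity hε (hn p) (z t p) (zs p)
        rw [hb]
        apply mul_le_mul_of_nonneg_left _ (le_of_lt hε)
        have hsplit2 : ∑ i, (x t p i - xs p i) * (Real.log (x t p i) - Real.log (xs p i))
            = (∑ i, x t p i * (Real.log (x t p i) - Real.log (xs p i)))
              + ∑ i, xs p i * (Real.log (xs p i) - Real.log (x t p i)) := by
          rw [← Finset.sum_add_distrib]
          apply Finset.sum_congr rfl
          intro i _
          ring
        rw [hsplit2]
        have := kl_nonneg_block (fun i => hx_pos t p i) (fun i => hxs_pos p i)
          (hx_sum t p) (hxs_sum p)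
        linarith
      have h3 : W t = ∑ p, ε * ∑ i, xs p i * (Real.log (xs p i) - Real.log (x t p i)) := by
        rw [hWdef]
        simp only
        rw [hVid (z t), Finset.mul_sum]
        rfl
      rw [h3]
      exact Finset.sum_le_sum hpb
    have hw1 : γ * (∑ p, ∑ i, (x t p i - xs p i) * (U (x t) p i - U xs p i)) ≤ 0 := by
      have := mul_le_mul_of_nonneg_left hm1 (le_of_lt hγ)
      simpa using this
    have hw2 : γ * W t ≤ γ * ∑ p, ∑ i, (x t p i - xs p i) * (z t p i - zs p i) :=
      mul_le_mul_of_nonneg_left hm2 (le_of_lt hγ)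
    rw [hsplit]
    linarith
  -- exponential decay of W
  have hexpd : ∀ t : ℝ, HasDerivAt (fun s : ℝ => Real.exp (γ*s)) (Real.exp (γ*t) * γ) t := by
    intro t
    have := ((hasDerivAt_id t).const_mul γ).exp
    simpa using this
  have hg : AntitoneOn (fun t => Real.exp (γ*t) * W t) (Set.Ici (0:ℝ)) := by
    apply antitoneOn_Ici_of_hasDerivAt
      (g := fun t => Real.exp (γ*t) * γ * W t + Real.exp (γ*t) * D t)
    · intro t ht
      exact (hexpd t).mul (hVd t ht)
    · intro t ht
      have h1 := hDle t ht
      have hep : (0:ℝ) < Real.exp (γ*t) := Real.exp_pos _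
      have h2 : Real.exp (γ*t) * D t ≤ Real.exp (γ*t) * (-γ * W t) :=
        mul_le_mul_of_nonneg_left h1 (le_of_lt hep)
      nlinarith
  have hdecay : ∀ t ∈ Set.Ici (0:ℝ), W t ≤ Real.exp (-(γ*t)) * W 0 := by
    intro t ht
    have h := hg (Set.mem_Ici.2 le_rfl) ht ht
    simp only [mul_zero, Real.exp_zero, one_mul] at h
    have hee : Real.exp (-(γ*t)) * Real.exp (γ*t) = 1 := by
      rw [← Real.exp_add]; simp
    have hen : (0:ℝ) < Real.exp (-(γ*t)) := Real.exp_pos _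
    have := mul_le_mul_of_nonneg_left h (le_of_lt hen)
    calc W t = (Real.exp (-(γ*t)) * Real.exp (γ*t)) * W t := by rw [hee, one_mul]
      _ = Real.exp (-(γ*t)) * (Real.exp (γ*t) * W t) := by ring
      _ ≤ Real.exp (-(γ*t)) * W 0 := this
  have hWtend : Tendsto W atTop (nhds 0) := by
    apply squeeze_zero' (Filter.Eventually.of_forall (fun t => hVnonneg (z t)))
      ((eventually_ge_atTop (0:ℝ)).mono (fun t ht => hdecay t ht))
    have h1 : Tendsto (fun t : ℝ => γ*t) atTop atTop :=
      Tendsto.const_mul_atTop hγ tendsto_id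
    have h2 : Tendsto (fun t : ℝ => -(γ*t)) atTop atBot := tendsto_neg_atBot_iff.2 h1
    have h3 : Tendsto (fun t : ℝ => Real.exp (-(γ*t))) atTop (nhds 0) :=
      Real.tendsto_exp_atBot.comp h2
    have := h3.mul_const (W 0)
    simpa using this
  -- convergence of the softmax coordinates
  have hxcoord : ∀ p i, Tendsto (fun t => x t p i) atTop (nhds (xs p i)) := by
    intro p i
    rw [tendsto_iff_dist_tendsto_zero]
    have hb : ∀ t : ℝ, dist (x t p i) (xs p i) ≤ Real.sqrt (2 * W t / ε) := by
      intro t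
      have h1 : (∑ j, (xs p j - x t p j)^2)/2
          ≤ ∑ j, xs p j * (Real.log (xs p j) - Real.log (x t p j)) :=
        kl_quad_block (fun j => hxs_pos p j) (fun j => hxs_le1 p j)
          (fun j => hx_pos t p j) (fun j => hx_le1 t p j) (hxs_sum p) (hx_sum t p)
      have h2 : ∑ j, xs p j * (Real.log (xs p j) - Real.log (x t p j))
          ≤ ∑ p', ∑ j, xs p' j * (Real.log (xs p' j) - Real.log (x t p' j)) :=
        Finset.single_le_sum (f := fun p' => ∑ j, xs p' j
            * (Real.log (xs p' j) - Real.log (x t p' j)))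
          (fun p' _ => kl_nonneg_block (fun j => hxs_pos p' j) (fun j => hx_pos t p' j)
            (hxs_sum p') (hx_sum t p')) (Finset.mem_univ p)
      have h3 : W t = ε * ∑ p', ∑ j, xs p' j * (Real.log (xs p' j) - Real.log (x t p' j)) := by
        rw [hWdef]
        simp only
        rw [hVid (z t)]
        rfl
      have h4 : (x t p i - xs p i)^2 ≤ ∑ j, (xs p j - x t p j)^2 := by
        have hsq : (x t p i - xs p i)^2 = (xs p i - x t p i)^2 := by ring
        rw [hsq]
        exact Finset.single_le_sum (f := fun j => (xs p j - x t p j)^2)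
          (fun j _ => sq_nonneg _) (Finset.mem_univ i)
      have h5 : (x t p i - xs p i)^2 ≤ 2 * W t / ε := by
        rw [le_div_iff₀ hε]
        nlinarith
      rw [Real.dist_eq]
      exact Real.abs_le_sqrt h5
    apply squeeze_zero' (Filter.Eventually.of_forall (fun t => dist_nonneg))
      (Filter.Eventually.of_forall hb)
    have h6 : Tendsto (fun t => 2 * W t / ε) atTop (nhds 0) := by
      have := (hWtend.const_mul 2).div_const ε
      simpa using this
    have h7 := (Real.continuous_sqrt.tendsto 0).comp h6
    rw [Real.sqrt_zero] at h7
    exact h7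
  have hxtend : Tendsto (fun t => softmaxBlk ε (z t)) atTop (nhds xs) :=
    tendsto_pi_nhds.2 (fun p => tendsto_pi_nhds.2 (fun i => hxcoord p i))
  refine ⟨?_, hxtend⟩
  -- convergence of U along the trajectory
  have hUtend : Tendsto (fun t => U (x t)) atTop (nhds zs) := by
    have hcw : ContinuousWithinAt U (simplexProd N nAct) xs := hU_lip.continuousOn xs hxsΔ
    have hin : Tendsto x atTop (nhdsWithin xs (simplexProd N nAct)) := by
      rw [tendsto_nhdsWithin_iff]
      exact ⟨hxtend, Filter.Eventually.of_forall (fun t => hxΔ t)⟩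
    have := hcw.tendsto.comp hin
    rw [hUxs] at this
    exact this
  have hUcoord : ∀ p i, Tendsto (fun t => U (x t) p i) atTop (nhds (zs p i)) := by
    intro p i
    exact tendsto_pi_nhds.1 (tendsto_pi_nhds.1 hUtend p) i
  apply tendsto_pi_nhds.2
  intro p
  apply tendsto_pi_nhds.2
  intro i
  exact ode_limit hγ (fun t ht => hz t ht p i) (hUcoord p i)
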